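/- In a decreasing maximal chain of Π_{n,s+1} with respect to the labeling λ, if x ⋖ y is an edge with λ(x ⋖ y) = (k,i,j) and k ≤ n−1, then the underlying partition of y has the form {1}{2}...{k−1} I_k ... I_m where I_k is the (non-singleton) part containing k, i.e., every element of [k−1] forms a singleton part of y. -/

import Mathlib

open Finset

/-- A vector partition of `[n]` into `s+1` components: a partition `P` of `[n]`
together with `s` labelings of its parts. -/
structure VPart (n s : ℕ) where
  P : Finpartition (Finset.univ : Finset (Fin n))
  w : Fin s → Finset (Fin n) → Finset (Fin n)
  card_w : ∀ i : Fin s, ∀ B ∈ P.parts, (w i B).card = B.card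
  part_w : ∀ i : Fin s, ∀ x : Fin n, ∃! B, B ∈ P.parts ∧ x ∈ w i B
  w_junk : ∀ i B, B ∉ P.parts → w i B = ∅

namespace VPart

variable {n s : ℕ}

@[ext] theorem ext' {x y : VPart n s} (hP : x.P = y.P) (hw : x.w = y.w) : x = y := by
  cases x; cases y; simp_all

/-- componentwise union-refinement order -/
instance : PartialOrder (VPart n s) where
  le x y := x.P ≤ y.P ∧
    ∀ i : Fin s, ∀ B ∈ x.P.parts, ∀ B' ∈ y.P.parts, B ⊆ B' → x.w i B ⊆ y.w i B'
  le_refl x := by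
    refine ⟨le_refl _, fun i B hB B' hB' hBB' => ?_⟩
    obtain rfl : B = B' := by
      obtain ⟨a, ha⟩ := x.P.nonempty_of_mem_parts hB
      exact x.P.eq_of_mem_parts hB hB' ha (hBB' ha)
    exact subset_rfl
  le_trans x y z hxy hyz := by
    refine ⟨le_trans hxy.1 hyz.1, fun i B hB B'' hB'' hBB'' => ?_⟩
    obtain ⟨B', hB', hBB'⟩ := hxy.1 hB
    obtain ⟨B''', hB''', hB'B'''⟩ := hyz.1 hB'
    obtain ⟨a, ha⟩ := x.P.nonempty_of_mem_parts hB
    obtain rfl : B''' = B'' :=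
      z.P.eq_of_mem_parts hB''' hB'' (hB'B''' (hBB' ha)) (hBB'' ha)
    exact subset_trans (hxy.2 i B hB B' hB' hBB') (hyz.2 i B' hB' B''' hB''' hB'B''')
  le_antisymm x y hxy hyx := by
    have hP : x.P = y.P := le_antisymm hxy.1 hyx.1
    refine ext' hP ?_
    funext i B
    by_cases hB : B ∈ x.P.parts
    · exact subset_antisymm (hxy.2 i B hB B (hP ▸ hB) subset_rfl)
        (hyx.2 i B (hP ▸ hB) B hB subset_rfl)
    · rw [x.w_junk i B hB, y.w_junk i B (hP ▸ hB)]

/-- the part of the underlying partition containing `k` -/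
def partOf (x : VPart n s) (k : Fin n) : Finset (Fin n) := x.P.part k

/-- the atom word of `x`: `atomWord x i k` is the element of the `i`-th label of the
part containing `k` whose rank in that label matches the rank of `k` in its part. -/
def atomWord (x : VPart n s) (i : Fin s) (k : Fin n) : Fin n :=
  (((x.w i (x.partOf k)).sort (· ≤ ·)).getD (((x.partOf k).filter (· < k)).card)) k

/-- `x` is an atom: all parts of the underlying partition are singletons. -/
def IsAtomic (x : VPart n s) : Prop := ∀ B ∈ x.P.parts, B.card = 1

/-- strict lexicographic order on atom words, with `i` as the major index
and `k` the minor index. -/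
def wordLt (A B : Fin s → Fin n → Fin n) : Prop :=
  ∃ i k, A i k < B i k ∧
    ∀ i' k', (i' < i ∨ (i' = i ∧ k' < k)) → A i' k' = B i' k'

def wordLe (A B : Fin s → Fin n → Fin n) : Prop := wordLt A B ∨ A = B

end VPart

/-- labels: `ℤ × ℤ × ℤ` with the lexicographic order -/
abbrev Lbl : Type := ℤ ×ₗ ℤ ×ₗ ℤ

def mkLbl (a b c : ℤ) : Lbl := toLex (a, toLex (b, c))

namespace VPart

variable {n s : ℕ}

set_option maxHeartbeats 1000000 in
open scoped Classical in
/-- the `(k,i,j)` label for an edge with distinct atom words (1-based) -/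
noncomputable def firstDiff (x y : VPart n s) : Lbl :=
  let D : Finset (Fin n × Fin s) :=
    Finset.univ.filter fun p => atomWord x p.2 p.1 ≠ atomWord y p.2 p.1
  if h : D.Nonempty then
    have hk : (D.image Prod.fst).Nonempty := h.image _
    let k := (D.image Prod.fst).min' hk
    have hk2 : ((D.filter fun p => p.1 = k).image Prod.snd).Nonempty := by
      obtain ⟨p, hp, hpk⟩ := Finset.mem_image.mp ((D.image Prod.fst).min'_mem hk)
      exact ⟨p.2, Finset.mem_image.mpr ⟨p, Finset.mem_filter.mpr ⟨hp, hpk⟩, rfl⟩⟩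
    let i := ((D.filter fun p => p.1 = k).image Prod.snd).min' hk2
    mkLbl ((k : ℕ) + 1) ((i : ℕ) + 1) ((atomWord y i k : ℕ) + 1)
  else mkLbl 0 0 0

/-- the maximum (1-based) of the union of the two merged parts -/
noncomputable def mergeMax (x y : VPart n s) : ℤ :=
  ((y.P.parts \ x.P.parts).sup fun B => B.sup fun t => (t : ℕ) + 1 : ℕ)

/-- the (1-based) index of an atom in the lexicographic order on atoms -/
noncomputable def atomIndex (a : VPart n s) : ℤ :=
  (Nat.card {a' : VPart n s // a'.IsAtomic ∧ wordLe (atomWord a') (atomWord a)} : ℤ)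

/-- The edge labeling `λ` of `Π_{n,s+1}` (on arbitrary pairs; only its values on
covering pairs are relevant). -/
noncomputable def lam : WithBot (VPart n s) → WithBot (VPart n s) → Lbl
  | ⊥, (y : VPart n s) => mkLbl ((n : ℤ) - 1) (s + atomIndex y) 0
  | (x : VPart n s), (y : VPart n s) =>
      if atomWord x = atomWord y then mkLbl n (mergeMax x y) 0 else firstDiff x y
  | _, _ => mkLbl 0 0 0

end VPart


namespace Stmt13Aux
variable {n : ℕ}

/-- rank of `x` in `s`: number of elements of `s` below `x`. -/
def rk (s : Finset (Fin n)) (x : Fin n) : ℕ := (s.filter (· < x)).card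

/-- `j`-th smallest element of `s` (default `d`). -/
def elt (s : Finset (Fin n)) (j : ℕ) (d : Fin n) : Fin n := ((s.sort (· ≤ ·)).getD j d)

lemma filter_lt_get_length (l : List (Fin n)) (hl : l.Pairwise (· < ·)) (j : ℕ) (h : j < l.length) :
    (l.filter (fun y => y < l.get ⟨j, h⟩)).length = j := by
  induction l generalizing j with
  | nil => simp at h
  | cons a t ih =>
    rcases List.pairwise_cons.mp hl with ⟨ha, ht⟩
    cases j with
    | zero =>
      simp only [List.get, List.filter_cons]
      rw [if_neg (by simp), List.length_eq_zero_iff]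
      rw [List.filter_eq_nil_iff]
      intro b hb
      simp only [decide_eq_true_eq]
      exact fun hba => absurd (hba.trans (ha b hb)) (lt_irrefl b)
    | succ j =>
      have h' : j < t.length := Nat.succ_lt_succ_iff.mp h
      have hga : a < t.get ⟨j, h'⟩ := ha _ (t.get_mem _)
      have : (a :: t).get ⟨j+1, h⟩ = t.get ⟨j, h'⟩ := rfl
      rw [this, List.filter_cons, if_pos (by simpa using hga), List.length_cons, ih ht j h']

lemma rk_lt_card {s : Finset (Fin n)} {x : Fin n} (hx : x ∈ s) : rk s x < s.card := by
  have : s.filter (· < x) ⊂ s := by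
    refine Finset.filter_ssubset.mpr ⟨x, hx, lt_irrefl x⟩
  exact Finset.card_lt_card this

lemma rk_le_card (s : Finset (Fin n)) (x : Fin n) : rk s x ≤ s.card :=
  Finset.card_le_card (Finset.filter_subset _ _)

lemma elt_mem {s : Finset (Fin n)} {j : ℕ} (hj : j < s.card) (d : Fin n) : elt s j d ∈ s := by
  have hh : j < (s.sort (· ≤ ·)).length := by rwa [Finset.length_sort]
  have : elt s j d = (s.sort (· ≤ ·)).get ⟨j, hh⟩ := List.getD_eq_get _ _ ⟨j, hh⟩
  rw [this]
  exact (Finset.mem_sort _).mp (List.get_mem _ _)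

lemma rk_elt {s : Finset (Fin n)} {j : ℕ} (hj : j < s.card) (d : Fin n) :
    rk s (elt s j d) = j := by
  classical
  have hh : j < (s.sort (· ≤ ·)).length := by rwa [Finset.length_sort]
  have he : elt s j d = (s.sort (· ≤ ·)).get ⟨j, hh⟩ := List.getD_eq_get _ _ ⟨j, hh⟩
  have hsorted := (Finset.sortedLT_sort s).pairwise
  have hlen := filter_lt_get_length _ hsorted j hh
  have hnd : ((s.sort (· ≤ ·)).filter (fun y => y < elt s j d)).Nodup :=
    (Finset.sort_nodup s _).filter _
  have htf : ((s.sort (· ≤ ·)).filter (fun y => y < elt s j d)).toFinset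
      = s.filter (· < elt s j d) := by
    rw [List.toFinset_filter, Finset.sort_toFinset]
    simp
  have hcard : (s.filter (· < elt s j d)).card
      = ((s.sort (· ≤ ·)).filter (fun y => y < elt s j d)).length := by
    rw [← htf, List.card_toFinset, hnd.dedup]
  rw [rk, hcard, he, hlen]

lemma rk_strictMonoOn {s : Finset (Fin n)} {x y : Fin n} (hx : x ∈ s) (hy : y ∈ s)
    (hxy : x < y) : rk s x < rk s y := by
  apply Finset.card_lt_card
  constructor
  · exact Finset.monotone_filter_right s (fun z _ hz => lt_trans hz hxy)
  · intro hsub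
    have h1 : x ∈ s.filter (· < y) := Finset.mem_filter.mpr ⟨hx, hxy⟩
    have h2 := hsub h1
    exact absurd (Finset.mem_filter.mp h2).2 (lt_irrefl x)

lemma elt_rk {s : Finset (Fin n)} {x : Fin n} (hx : x ∈ s) (d : Fin n) :
    elt s (rk s x) d = x := by
  have h1 : rk s x < s.card := rk_lt_card hx
  have h2 : elt s (rk s x) d ∈ s := elt_mem h1 d
  have h3 : rk s (elt s (rk s x) d) = rk s x := rk_elt h1 d
  rcases lt_trichotomy (elt s (rk s x) d) x with h | h | h
  · exact absurd (h3 ▸ rk_strictMonoOn h2 hx h) (lt_irrefl _)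
  · exact h
  · exact absurd (h3 ▸ rk_strictMonoOn hx h2 h) (by omega)

lemma rk_insert {s : Finset (Fin n)} {a : Fin n} (ha : a ∉ s) (x : Fin n) :
    rk (insert a s) x = rk s x + if a < x then 1 else 0 := by
  classical
  unfold rk
  rw [Finset.filter_insert]
  split
  · rw [Finset.card_insert_of_notMem (fun h => ha (Finset.mem_filter.mp h).1)]
  · simp

lemma rk_mono {s : Finset (Fin n)} {x y : Fin n} (hxy : x ≤ y) : rk s x ≤ rk s y :=
  Finset.card_le_card (Finset.monotone_filter_right s (fun z _ hz => lt_of_lt_of_le hz hxy))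

/-- key insertion lemma: if `a`'s rank in `insert a s` is at most `j < s.card`, then the
`(j+1)`-st element of `insert a s` is the `j`-th element of `s`. -/
lemma elt_insert_high {s : Finset (Fin n)} {a : Fin n} (ha : a ∉ s) {j : ℕ} (hj : j < s.card)
    (hr : rk (insert a s) a ≤ j) (d d' : Fin n) : elt (insert a s) (j + 1) d = elt s j d' := by
  set x := elt s j d' with hx
  have hxs : x ∈ s := elt_mem hj d'
  have hrx : rk s x = j := rk_elt hj d'
  have hax : a ≠ x := fun h => ha (h ▸ hxs)
  have halt : a < x := by
    rcases lt_or_gt_of_ne hax with h | h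
    · exact h
    · exfalso
      have h1 : rk (insert a s) x < rk (insert a s) a :=
        rk_strictMonoOn (Finset.mem_insert_of_mem hxs) (Finset.mem_insert_self a s) h
      have h2 : rk (insert a s) x = j := by
        rw [rk_insert ha, hrx, if_neg (not_lt_of_gt h)]; omega
      omega
  have h3 : rk (insert a s) x = j + 1 := by
    rw [rk_insert ha, hrx, if_pos halt]
  have := elt_rk (s := insert a s) (Finset.mem_insert_of_mem hxs) d
  rw [h3] at this
  exact this

end Stmt13Aux

namespace VPart
open Stmt13Aux

variable {n s : ℕ}

theorem le_iff' {x y : VPart n s} : x ≤ y ↔ (x.P ≤ y.P ∧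
    ∀ i : Fin s, ∀ B ∈ x.P.parts, ∀ B' ∈ y.P.parts, B ⊆ B' → x.w i B ⊆ y.w i B') := Iff.rfl

lemma partOf_mem (x : VPart n s) (k : Fin n) : x.partOf k ∈ x.P.parts :=
  x.P.part_mem.mpr (mem_univ k)

lemma mem_partOf (x : VPart n s) (k : Fin n) : k ∈ x.partOf k :=
  x.P.mem_part (mem_univ k)

lemma partOf_eq (x : VPart n s) {B : Finset (Fin n)} (hB : B ∈ x.P.parts) {k : Fin n}
    (hk : k ∈ B) : x.partOf k = B :=
  x.P.part_eq_of_mem hB hk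

lemma atomWord_eq (x : VPart n s) (i : Fin s) (k : Fin n) :
    x.atomWord i k = elt (x.w i (x.partOf k)) (rk (x.partOf k) k) k := rfl

lemma card_w_partOf (x : VPart n s) (i : Fin s) (k : Fin n) :
    (x.w i (x.partOf k)).card = (x.partOf k).card :=
  x.card_w i _ (x.partOf_mem k)

lemma rk_lt_card_w (x : VPart n s) (i : Fin s) (k : Fin n) :
    rk (x.partOf k) k < (x.w i (x.partOf k)).card := by
  rw [card_w_partOf]; exact rk_lt_card (x.mem_partOf k)

lemma atomWord_mem (x : VPart n s) (i : Fin s) (k : Fin n) :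
    x.atomWord i k ∈ x.w i (x.partOf k) := by
  rw [atomWord_eq]; exact elt_mem (rk_lt_card_w x i k) k

lemma w_eq_of_mem {x : VPart n s} {i : Fin s} {B B' : Finset (Fin n)}
    (hB : B ∈ x.P.parts) (hB' : B' ∈ x.P.parts) {a : Fin n}
    (ha : a ∈ x.w i B) (ha' : a ∈ x.w i B') : B = B' := by
  obtain ⟨C, _, hun⟩ := x.part_w i a
  rw [hun B ⟨hB, ha⟩, hun B' ⟨hB', ha'⟩]

lemma w_disjoint {x : VPart n s} {i : Fin s} {B B' : Finset (Fin n)}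
    (hB : B ∈ x.P.parts) (hB' : B' ∈ x.P.parts) (hne : B ≠ B') :
    Disjoint (x.w i B) (x.w i B') :=
  Finset.disjoint_left.mpr fun {a} ha ha' => hne (w_eq_of_mem hB hB' ha ha')

lemma partOf_subset_of_le {x y : VPart n s} (h : x ≤ y) (k : Fin n) :
    x.partOf k ⊆ y.partOf k := by
  obtain ⟨C, hC, hsub⟩ := h.1 (x.partOf_mem k)
  have hc : y.partOf k = C := y.partOf_eq hC (hsub (x.mem_partOf k))
  rw [hc]; exact hsub

lemma w_partOf_subset_of_le {x y : VPart n s} (h : x ≤ y) (i : Fin s) (k : Fin n) :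
    x.w i (x.partOf k) ⊆ y.w i (y.partOf k) :=
  h.2 i _ (x.partOf_mem k) _ (y.partOf_mem k) (partOf_subset_of_le h k)

lemma atomWord_eq_of_singleton {x y : VPart n s} (h : x ≤ y) {m : Fin n}
    (hm : y.partOf m = {m}) (i : Fin s) : x.atomWord i m = y.atomWord i m := by
  have hx : x.partOf m = {m} := by
    have h1 : x.partOf m ⊆ {m} := hm ▸ partOf_subset_of_le h m
    exact Finset.eq_of_subset_of_card_le h1 (by
      rw [Finset.card_singleton]
      exact Finset.card_pos.mpr ⟨m, x.mem_partOf m⟩)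
  have hw : x.w i (x.partOf m) = y.w i (y.partOf m) :=
    Finset.eq_of_subset_of_card_le (w_partOf_subset_of_le h i m)
      (by rw [card_w_partOf, card_w_partOf, hx, hm])
  rw [atomWord_eq, atomWord_eq, hw, hx, hm]

lemma atomWord_injective (x : VPart n s) (i : Fin s) : Function.Injective (x.atomWord i) := by
  intro t t' h
  by_cases hp : x.partOf t = x.partOf t'
  · have h1 : rk (x.partOf t) t < (x.w i (x.partOf t)).card := rk_lt_card_w x i t
    have h2 : rk (x.partOf t') t' < (x.w i (x.partOf t')).card := rk_lt_card_w x i t'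
    rw [atomWord_eq, atomWord_eq, hp] at h
    have h3 : rk (x.partOf t') t = rk (x.partOf t') t' := by
      have e1 := rk_elt (s := x.w i (x.partOf t')) (hp ▸ h1) t
      have e2 := rk_elt (s := x.w i (x.partOf t')) h2 t'
      rw [← e1, ← e2, h]
    have ht : t ∈ x.partOf t' := hp ▸ x.mem_partOf t
    have ht' : t' ∈ x.partOf t' := x.mem_partOf t'
    rcases lt_trichotomy t t' with hlt | hEq | hgt
    · exact absurd (h3 ▸ rk_strictMonoOn ht ht' hlt) (lt_irrefl _)
    · exact hEq
    · exact absurd (h3 ▸ rk_strictMonoOn ht' ht hgt) (by omega)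
  · exact absurd
      (w_eq_of_mem (x.partOf_mem t) (x.partOf_mem t') (atomWord_mem x i t)
        (h ▸ atomWord_mem x i t'))
      hp

lemma atomWord_surjective (x : VPart n s) (i : Fin s) : Function.Surjective (x.atomWord i) :=
  Finite.injective_iff_surjective.mp (atomWord_injective x i)

end VPart

namespace VPart
open Stmt13Aux

variable {n s : ℕ}

lemma parts_disjoint {x : VPart n s} {B B' : Finset (Fin n)}
    (hB : B ∈ x.P.parts) (hB' : B' ∈ x.P.parts) (hne : B ≠ B') : Disjoint B B' :=
  x.P.disjoint (Finset.mem_coe.mpr hB) (Finset.mem_coe.mpr hB') hne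

lemma union_not_mem_parts (X : VPart n s) {B1 B2 : Finset (Fin n)}
    (h1 : B1 ∈ X.P.parts) (h2 : B2 ∈ X.P.parts) (hne : B1 ≠ B2) :
    B1 ∪ B2 ∉ X.P.parts := by
  intro h
  obtain ⟨a, ha⟩ := X.P.nonempty_of_mem_parts h1
  have h3 : B1 ∪ B2 = B1 :=
    X.P.eq_of_mem_parts h h1 (Finset.mem_union_left _ ha) ha
  obtain ⟨b, hb⟩ := X.P.nonempty_of_mem_parts h2
  have hb1 : b ∈ B1 := h3 ▸ Finset.mem_union_right _ hb
  exact (Finset.disjoint_left.mp (parts_disjoint h1 h2 hne) hb1) hb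

lemma parts_eq_insert (X : VPart n s) {B1 B2 : Finset (Fin n)}
    (h1 : B1 ∈ X.P.parts) (h2 : B2 ∈ X.P.parts) (hne : B1 ≠ B2) :
    X.P.parts = insert B1 (insert B2 ((X.P.parts.erase B1).erase B2)) := by
  rw [Finset.insert_erase (Finset.mem_erase.mpr ⟨fun h => hne h.symm, h2⟩),
    Finset.insert_erase h1]

/-- merging two parts of a vector partition (labels are merged by union). -/
noncomputable def merge (X : VPart n s) (B1 B2 : Finset (Fin n))
    (h1 : B1 ∈ X.P.parts) (h2 : B2 ∈ X.P.parts) (hne : B1 ≠ B2) : VPart n s where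
  P := { parts := insert (B1 ∪ B2) ((X.P.parts.erase B1).erase B2)
         supIndep := by
           rw [Finset.supIndep_iff_pairwiseDisjoint]
           intro C hC C' hC' hCC'
           simp only [Finset.coe_insert, Set.mem_insert_iff, Finset.mem_coe,
             Finset.mem_erase] at hC hC'
           rcases hC with rfl | ⟨hC2, hC1, hC⟩
           · rcases hC' with rfl | ⟨hC2', hC1', hC'⟩
             · exact absurd rfl hCC'
             · exact Finset.disjoint_union_left.mpr
                 ⟨parts_disjoint h1 hC' (fun h => hC1' h.symm),
                  parts_disjoint h2 hC' (fun h => hC2' h.symm)⟩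
           · rcases hC' with rfl | ⟨hC2', hC1', hC'⟩
             · exact (Finset.disjoint_union_left.mpr
                 ⟨parts_disjoint h1 hC (fun h => hC1 h.symm),
                  parts_disjoint h2 hC (fun h => hC2 h.symm)⟩).symm
             · exact parts_disjoint hC hC' hCC'
         sup_parts := by
           have hsup := X.P.sup_parts
           rw [parts_eq_insert X h1 h2 hne] at hsup
           rw [Finset.sup_insert] at hsup ⊢
           rw [Finset.sup_insert] at hsup
           simp only [id_eq] at hsup ⊢
           rw [← Finset.sup_eq_union, sup_assoc]
           exact hsup
         bot_notMem := by
           intro h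
           rcases Finset.mem_insert.mp h with h | h
           · obtain ⟨a, ha⟩ := X.P.nonempty_of_mem_parts h1
             have : a ∈ (⊥ : Finset (Fin n)) := h ▸ Finset.mem_union_left _ ha
             simp at this
           · exact X.P.bot_notMem ((Finset.erase_subset _ _) ((Finset.erase_subset _ _) h)) }
  w := fun i B => if B = B1 ∪ B2 then X.w i B1 ∪ X.w i B2
       else if B ∈ (X.P.parts.erase B1).erase B2 then X.w i B else ∅
  card_w := by
    intro i B hB
    rcases Finset.mem_insert.mp hB with rfl | hB'
    · rw [if_pos rfl,
        Finset.card_union_of_disjoint (w_disjoint h1 h2 hne),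
        Finset.card_union_of_disjoint (parts_disjoint h1 h2 hne),
        X.card_w i B1 h1, X.card_w i B2 h2]
    · have hBparts : B ∈ X.P.parts := (Finset.erase_subset _ _) ((Finset.erase_subset _ _) hB')
      rw [if_neg (fun (h : B = B1 ∪ B2) => union_not_mem_parts X h1 h2 hne (h ▸ hBparts)), if_pos hB']
      exact X.card_w i B hBparts
  part_w := by
    intro i a
    dsimp only
    obtain ⟨C, ⟨hC, haC⟩, hCuniq⟩ := X.part_w i a
    by_cases hC12 : C = B1 ∨ C = B2
    · refine ⟨B1 ∪ B2, ⟨Finset.mem_insert_self _ _, ?_⟩, ?_⟩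
      · rw [if_pos rfl]
        rcases hC12 with rfl | rfl
        · exact Finset.mem_union_left _ haC
        · exact Finset.mem_union_right _ haC
      · rintro B' ⟨hB', haB'⟩
        rcases Finset.mem_insert.mp hB' with rfl | hB''
        · rfl
        · exfalso
          have hBparts : B' ∈ X.P.parts :=
            (Finset.erase_subset _ _) ((Finset.erase_subset _ _) hB'')
          rw [if_neg (fun (h : B' = B1 ∪ B2) => union_not_mem_parts X h1 h2 hne (h ▸ hBparts)),
            if_pos hB''] at haB'
          have heq := hCuniq B' ⟨hBparts, haB'⟩
          rcases Finset.mem_erase.mp hB'' with ⟨hne2, h3⟩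
          rcases Finset.mem_erase.mp h3 with ⟨hne1, _⟩
          rcases hC12 with h | h
          · exact hne1 (heq.trans h)
          · exact hne2 (heq.trans h)
    · push_neg at hC12
      have hCee : C ∈ (X.P.parts.erase B1).erase B2 :=
        Finset.mem_erase.mpr ⟨hC12.2, Finset.mem_erase.mpr ⟨hC12.1, hC⟩⟩
      refine ⟨C, ⟨Finset.mem_insert_of_mem hCee, ?_⟩, ?_⟩
      · rw [if_neg (fun (h : C = B1 ∪ B2) => union_not_mem_parts X h1 h2 hne (h ▸ hC)), if_pos hCee]
        exact haC
      · rintro B' ⟨hB', haB'⟩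
        rcases Finset.mem_insert.mp hB' with rfl | hB''
        · exfalso
          rw [if_pos rfl] at haB'
          rcases Finset.mem_union.mp haB' with h | h
          · exact hC12.1 (hCuniq B1 ⟨h1, h⟩).symm
          · exact hC12.2 (hCuniq B2 ⟨h2, h⟩).symm
        · have hBparts : B' ∈ X.P.parts :=
            (Finset.erase_subset _ _) ((Finset.erase_subset _ _) hB'')
          rw [if_neg (fun (h : B' = B1 ∪ B2) => union_not_mem_parts X h1 h2 hne (h ▸ hBparts)),
            if_pos hB''] at haB'
          exact hCuniq B' ⟨hBparts, haB'⟩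
  w_junk := by
    intro i B hB
    rw [if_neg (fun (h : B = B1 ∪ B2) => hB (h ▸ Finset.mem_insert_self (B1 ∪ B2) ((X.P.parts.erase B1).erase B2))),
      if_neg (fun h => hB (Finset.mem_insert_of_mem h))]

variable {X Y : VPart n s} {B1 B2 : Finset (Fin n)}

lemma merge_parts (h1 : B1 ∈ X.P.parts) (h2 : B2 ∈ X.P.parts) (hne : B1 ≠ B2) :
    (merge X B1 B2 h1 h2 hne).P.parts = insert (B1 ∪ B2) ((X.P.parts.erase B1).erase B2) := rfl

lemma merge_w_union (h1 : B1 ∈ X.P.parts) (h2 : B2 ∈ X.P.parts) (hne : B1 ≠ B2) (i : Fin s) :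
    (merge X B1 B2 h1 h2 hne).w i (B1 ∪ B2) = X.w i B1 ∪ X.w i B2 := if_pos rfl

lemma merge_w_other (h1 : B1 ∈ X.P.parts) (h2 : B2 ∈ X.P.parts) (hne : B1 ≠ B2) (i : Fin s)
    {B : Finset (Fin n)} (hB : B ∈ (X.P.parts.erase B1).erase B2) :
    (merge X B1 B2 h1 h2 hne).w i B = X.w i B := by
  have hBparts : B ∈ X.P.parts := (Finset.erase_subset _ _) ((Finset.erase_subset _ _) hB)
  show (if B = B1 ∪ B2 then X.w i B1 ∪ X.w i B2
      else if B ∈ (X.P.parts.erase B1).erase B2 then X.w i B else ∅) = X.w i B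
  rw [if_neg (fun (h : B = B1 ∪ B2) => union_not_mem_parts X h1 h2 hne (h ▸ hBparts)), if_pos hB]

lemma le_merge (h1 : B1 ∈ X.P.parts) (h2 : B2 ∈ X.P.parts) (hne : B1 ≠ B2) :
    X ≤ merge X B1 B2 h1 h2 hne := by
  constructor
  · intro B hB
    by_cases hB12 : B = B1 ∨ B = B2
    · refine ⟨B1 ∪ B2, Finset.mem_insert_self _ _, ?_⟩
      rcases hB12 with rfl | rfl
      · exact Finset.subset_union_left
      · exact Finset.subset_union_right
    · push_neg at hB12
      exact ⟨B, Finset.mem_insert_of_mem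
        (Finset.mem_erase.mpr ⟨hB12.2, Finset.mem_erase.mpr ⟨hB12.1, hB⟩⟩), subset_rfl⟩
  · intro i B hB B' hB' hsub
    rcases Finset.mem_insert.mp hB' with rfl | hB''
    · rw [merge_w_union]
      obtain ⟨a, ha⟩ := X.P.nonempty_of_mem_parts hB
      rcases Finset.mem_union.mp (hsub ha) with h | h
      · rw [X.P.eq_of_mem_parts hB h1 ha h]
        exact Finset.subset_union_left
      · rw [X.P.eq_of_mem_parts hB h2 ha h]
        exact Finset.subset_union_right
    · have hBparts : B' ∈ X.P.parts := (Finset.erase_subset _ _) ((Finset.erase_subset _ _) hB'')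
      obtain ⟨a, ha⟩ := X.P.nonempty_of_mem_parts hB
      rw [X.P.eq_of_mem_parts hB hBparts ha (hsub ha), merge_w_other h1 h2 hne i hB'']

lemma merge_ne (h1 : B1 ∈ X.P.parts) (h2 : B2 ∈ X.P.parts) (hne : B1 ≠ B2) :
    X ≠ merge X B1 B2 h1 h2 hne := by
  intro h
  apply union_not_mem_parts X h1 h2 hne
  rw [h, merge_parts]
  exact Finset.mem_insert_self _ _

lemma lt_merge (h1 : B1 ∈ X.P.parts) (h2 : B2 ∈ X.P.parts) (hne : B1 ≠ B2) :
    X < merge X B1 B2 h1 h2 hne :=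
  lt_of_le_of_ne (le_merge h1 h2 hne) (merge_ne h1 h2 hne)

lemma merge_le (h1 : B1 ∈ X.P.parts) (h2 : B2 ∈ X.P.parts) (hne : B1 ≠ B2)
    (hXY : X ≤ Y) {C : Finset (Fin n)} (hC : C ∈ Y.P.parts)
    (hsub1 : B1 ⊆ C) (hsub2 : B2 ⊆ C) : merge X B1 B2 h1 h2 hne ≤ Y := by
  constructor
  · intro B hB
    rcases Finset.mem_insert.mp hB with rfl | hB''
    · exact ⟨C, hC, Finset.union_subset hsub1 hsub2⟩
    · exact hXY.1 ((Finset.erase_subset _ _) ((Finset.erase_subset _ _) hB''))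
  · intro i B hB B' hB' hsub
    rcases Finset.mem_insert.mp hB with rfl | hB''
    · have hCB' : B' = C := by
        obtain ⟨a, ha⟩ := X.P.nonempty_of_mem_parts h1
        exact Y.P.eq_of_mem_parts hB' hC (hsub (Finset.mem_union_left _ ha)) (hsub1 ha)
      rw [merge_w_union, hCB']
      exact Finset.union_subset
        (hXY.2 i B1 h1 C hC hsub1) (hXY.2 i B2 h2 C hC hsub2)
    · have hBparts : B ∈ X.P.parts := (Finset.erase_subset _ _) ((Finset.erase_subset _ _) hB'')
      rw [merge_w_other h1 h2 hne i hB'']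
      exact hXY.2 i B hBparts B' hB' hsub

lemma eq_of_le_of_parts_subset (hLE : X ≤ Y) (hP : X.P.parts ⊆ Y.P.parts) : X = Y := by
  have hparts : X.P.parts = Y.P.parts := by
    apply Finset.Subset.antisymm hP
    intro C hC
    obtain ⟨a, ha⟩ := Y.P.nonempty_of_mem_parts hC
    have h1 : X.partOf a ∈ Y.P.parts := hP (X.partOf_mem a)
    have h2 : X.partOf a = C := Y.P.eq_of_mem_parts h1 hC (X.mem_partOf a) ha
    rw [← h2]; exact X.partOf_mem a
  have hPeq : X.P = Y.P := Finpartition.ext hparts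
  refine ext' hPeq ?_
  funext i B
  by_cases hB : B ∈ X.P.parts
  · exact Finset.eq_of_subset_of_card_le (hLE.2 i B hB B (hparts ▸ hB) subset_rfl)
      (by rw [X.card_w i B hB, Y.card_w i B (hparts ▸ hB)])
  · rw [X.w_junk i B hB, Y.w_junk i B (hparts ▸ hB)]

lemma covby_coe {x y : VPart n s} (h : (x : WithBot (VPart n s)) ⋖ (y : WithBot (VPart n s))) :
    x ⋖ y := by
  constructor
  · exact WithBot.coe_lt_coe.mp h.1
  · intro z hz1 hz2
    exact h.2 (WithBot.coe_lt_coe.mpr hz1) (WithBot.coe_lt_coe.mpr hz2)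

lemma exists_merge_of_covby (h : X ⋖ Y) :
    ∃ (B1 B2 : Finset (Fin n)) (h1 : B1 ∈ X.P.parts) (h2 : B2 ∈ X.P.parts) (hne : B1 ≠ B2),
      Y = merge X B1 B2 h1 h2 hne := by
  have hLE : X ≤ Y := h.1.le
  by_cases hbig : ∃ C ∈ Y.P.parts, ∃ B1 ∈ X.P.parts, ∃ B2 ∈ X.P.parts,
      B1 ≠ B2 ∧ B1 ⊆ C ∧ B2 ⊆ C
  · obtain ⟨C, hC, B1, h1, B2, h2, hne, hsub1, hsub2⟩ := hbig
    refine ⟨B1, B2, h1, h2, hne, ?_⟩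
    have hZY : merge X B1 B2 h1 h2 hne ≤ Y := merge_le h1 h2 hne hLE hC hsub1 hsub2
    rcases eq_or_lt_of_le hZY with hEq | hlt
    · exact hEq.symm
    · exact absurd hlt (h.2 (lt_merge h1 h2 hne))
  · exfalso
    push_neg at hbig
    apply h.1.ne
    apply eq_of_le_of_parts_subset hLE
    intro B hB
    obtain ⟨C, hC, hsub⟩ := hLE.1 hB
    have hBC : B = C := by
      by_contra hne
      obtain ⟨a, haC, haB⟩ := Finset.exists_of_ssubset (Finset.ssubset_iff_subset_ne.mpr ⟨hsub, hne⟩)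
      have h1 : X.partOf a ⊆ Y.partOf a := partOf_subset_of_le hLE a
      have h2 : Y.partOf a = C := Y.partOf_eq hC haC
      have h3 : B ≠ X.partOf a := fun h => haB (h ▸ X.mem_partOf a)
      exact hbig C hC B hB (X.partOf a) (X.partOf_mem a) h3 hsub (h2 ▸ h1)
    rw [hBC]; exact hC

end VPart

namespace VPart
open Stmt13Aux

variable {n s : ℕ} {X Y : VPart n s} {B1 B2 : Finset (Fin n)}

lemma atomWord_merge_outside (h1 : B1 ∈ X.P.parts) (h2 : B2 ∈ X.P.parts) (hne : B1 ≠ B2)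
    {t : Fin n} (ht : t ∉ B1 ∪ B2) (i : Fin s) :
    (merge X B1 B2 h1 h2 hne).atomWord i t = X.atomWord i t := by
  have hC : X.partOf t ∈ (X.P.parts.erase B1).erase B2 := by
    refine Finset.mem_erase.mpr ⟨?_, Finset.mem_erase.mpr ⟨?_, X.partOf_mem t⟩⟩
    · exact fun h => ht (Finset.mem_union_right _ (h ▸ X.mem_partOf t))
    · exact fun h => ht (Finset.mem_union_left _ (h ▸ X.mem_partOf t))
  have hpart : (merge X B1 B2 h1 h2 hne).partOf t = X.partOf t :=
    partOf_eq _ (Finset.mem_insert_of_mem hC) (X.mem_partOf t)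
  rw [atomWord_eq, atomWord_eq, hpart, merge_w_other h1 h2 hne i hC]

lemma merge_partOf_union (h1 : B1 ∈ X.P.parts) (h2 : B2 ∈ X.P.parts) (hne : B1 ≠ B2)
    {t : Fin n} (ht : t ∈ B1 ∪ B2) :
    (merge X B1 B2 h1 h2 hne).partOf t = B1 ∪ B2 :=
  partOf_eq _ (Finset.mem_insert_self _ _) ht

lemma merge_comm (h1 : B1 ∈ X.P.parts) (h2 : B2 ∈ X.P.parts) (hne : B1 ≠ B2) :
    merge X B1 B2 h1 h2 hne = merge X B2 B1 h2 h1 hne.symm := by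
  have hee : (X.P.parts.erase B1).erase B2 = (X.P.parts.erase B2).erase B1 := by
    ext C; simp only [Finset.mem_erase]; tauto
  refine ext' ?_ ?_
  · apply Finpartition.ext
    show insert (B1 ∪ B2) ((X.P.parts.erase B1).erase B2)
      = insert (B2 ∪ B1) ((X.P.parts.erase B2).erase B1)
    rw [Finset.union_comm, hee]
  · funext i B
    show (if B = B1 ∪ B2 then X.w i B1 ∪ X.w i B2
        else if B ∈ (X.P.parts.erase B1).erase B2 then X.w i B else ∅)
      = (if B = B2 ∪ B1 then X.w i B2 ∪ X.w i B1
        else if B ∈ (X.P.parts.erase B2).erase B1 then X.w i B else ∅)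
    rw [Finset.union_comm B2 B1, Finset.union_comm (X.w i B2) (X.w i B1), hee]

/-- Key lemma: if a singleton `{m}` is merged with another part and all atom words at
positions `≤ m` are unchanged, then the whole atom word is unchanged. -/
lemma agree_all_of_agree_le {m : Fin n}
    (h1 : ({m} : Finset (Fin n)) ∈ X.P.parts) (h2 : B2 ∈ X.P.parts)
    (hne : ({m} : Finset (Fin n)) ≠ B2)
    (hagree : ∀ (i : Fin s) (t : Fin n), t ≤ m →
      X.atomWord i t = (merge X {m} B2 h1 h2 hne).atomWord i t) :
    ∀ (i : Fin s) (t : Fin n), X.atomWord i t = (merge X {m} B2 h1 h2 hne).atomWord i t := by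
  intro i t
  by_cases htm : t ≤ m
  · exact hagree i t htm
  push_neg at htm
  by_cases htB : t ∈ ({m} : Finset (Fin n)) ∪ B2
  · have htB2 : t ∈ B2 := by
      rcases Finset.mem_union.mp htB with h | h
      · exact absurd (Finset.mem_singleton.mp h) (ne_of_gt htm)
      · exact h
    have hmB2 : m ∉ B2 := fun h =>
      hne (X.P.eq_of_mem_parts h1 h2 (Finset.mem_singleton_self m) h)
    have hBins : ({m} : Finset (Fin n)) ∪ B2 = insert m B2 := (Finset.insert_eq _ _).symm
    have hXpart : X.partOf t = B2 := partOf_eq X h2 htB2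
    have hYpart : (merge X {m} B2 h1 h2 hne).partOf t = insert m B2 :=
      hBins ▸ merge_partOf_union h1 h2 hne htB
    have hXm : X.partOf m = {m} := partOf_eq X h1 (Finset.mem_singleton_self m)
    have hYm : (merge X {m} B2 h1 h2 hne).partOf m = insert m B2 :=
      hBins ▸ merge_partOf_union h1 h2 hne
        (Finset.mem_union_left _ (Finset.mem_singleton_self m))
    obtain ⟨a, haw⟩ := Finset.card_eq_one.mp
      (by rw [X.card_w i _ h1, Finset.card_singleton] : (X.w i ({m} : Finset (Fin n))).card = 1)
    have hwY : (merge X {m} B2 h1 h2 hne).w i (insert m B2) = insert a (X.w i B2) := by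
      rw [← hBins, merge_w_union, haw, (Finset.insert_eq _ _).symm]
    have haw2 : a ∉ X.w i B2 := by
      have hd := w_disjoint (i := i) h1 h2 hne
      rw [haw] at hd
      exact Finset.disjoint_singleton_left.mp hd
    have hrkt : rk (insert m B2) t = rk B2 t + 1 := by
      rw [rk_insert hmB2, if_pos htm]
    have hrkm : rk (insert m B2) m = rk B2 m := by
      rw [rk_insert hmB2, if_neg (lt_irrefl m), Nat.add_zero]
    have hAm := hagree i m le_rfl
    rw [atomWord_eq, atomWord_eq, hXm, hYm, hwY, hrkm, haw] at hAm
    have hrk0 : rk ({m} : Finset (Fin n)) m = 0 := by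
      unfold rk
      rw [Finset.filter_singleton, if_neg (lt_irrefl m), Finset.card_empty]
    rw [hrk0] at hAm
    have helta : elt ({a} : Finset (Fin n)) 0 m = a := by
      unfold elt
      rw [Finset.sort_singleton]
      rfl
    rw [helta] at hAm
    -- hAm : a = elt (insert a (X.w i B2)) (rk B2 m) m
    have hram : rk (insert a (X.w i B2)) a ≤ rk B2 m := by
      have hlt : rk B2 m < (insert a (X.w i B2)).card := by
        rw [Finset.card_insert_of_notMem haw2, X.card_w i B2 h2]
        have := rk_le_card B2 m
        omega
      have hre := rk_elt hlt m
      rw [← hAm] at hre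
      rw [hre]
    rw [atomWord_eq, atomWord_eq, hXpart, hYpart, hwY, hrkt]
    refine (elt_insert_high haw2 ?_ ?_ t t).symm
    · rw [X.card_w i B2 h2]
      exact rk_lt_card htB2
    · exact le_trans hram (rk_mono (le_of_lt htm))
  · exact (atomWord_merge_outside h1 h2 hne htB i).symm

/-- the canonical atomic element below `y` -/
noncomputable def toAtom (y : VPart n s) : VPart n s where
  P := { parts := univ.image fun t : Fin n => ({t} : Finset (Fin n))
         supIndep := by
           rw [Finset.supIndep_iff_pairwiseDisjoint]
           intro C hC C' hC' hCC'
           simp only [Finset.coe_image, Set.mem_image] at hC hC'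
           obtain ⟨t, -, rfl⟩ := hC
           obtain ⟨t', -, rfl⟩ := hC'
           show Disjoint ({t} : Finset (Fin n)) {t'}
           rw [Finset.disjoint_singleton]
           exact fun h => hCC' (by rw [h])
         sup_parts := by
           apply Finset.eq_univ_of_forall
           intro a
           exact Finset.mem_sup.mpr
             ⟨{a}, Finset.mem_image_of_mem _ (Finset.mem_univ a), Finset.mem_singleton_self a⟩
         bot_notMem := by
           intro h
           obtain ⟨t, -, ht⟩ := Finset.mem_image.mp h
           exact Finset.singleton_ne_empty t (by rw [ht]; rfl) }
  w := fun i B => if B ∈ univ.image (fun t : Fin n => ({t} : Finset (Fin n)))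
       then B.image (y.atomWord i) else ∅
  card_w := by
    intro i B hB
    obtain ⟨t, -, rfl⟩ := Finset.mem_image.mp hB
    rw [if_pos hB, Finset.image_singleton, Finset.card_singleton, Finset.card_singleton]
  part_w := by
    intro i a
    dsimp only
    obtain ⟨t, ht⟩ := atomWord_surjective y i a
    refine ⟨{t}, ⟨Finset.mem_image_of_mem _ (Finset.mem_univ t), ?_⟩, ?_⟩
    · rw [if_pos (Finset.mem_image_of_mem _ (Finset.mem_univ t)), Finset.image_singleton, ht]
      exact Finset.mem_singleton_self a
    · rintro B' ⟨hB', haB'⟩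
      obtain ⟨t', -, rfl⟩ := Finset.mem_image.mp hB'
      rw [if_pos hB', Finset.image_singleton] at haB'
      have h1 : y.atomWord i t' = a := (Finset.mem_singleton.mp haB').symm
      have h2 : t' = t := atomWord_injective y i (h1.trans ht.symm)
      rw [h2]
  w_junk := by
    intro i B hB
    rw [if_neg hB]

lemma toAtom_partOf (y : VPart n s) (t : Fin n) : (toAtom y).partOf t = {t} :=
  partOf_eq _ (Finset.mem_image_of_mem _ (Finset.mem_univ t)) (Finset.mem_singleton_self t)

lemma toAtom_le (y : VPart n s) : toAtom y ≤ y := by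
  constructor
  · intro B hB
    obtain ⟨t, -, rfl⟩ := Finset.mem_image.mp hB
    exact ⟨y.partOf t, y.partOf_mem t, Finset.singleton_subset_iff.mpr (y.mem_partOf t)⟩
  · intro i B hB B' hB' hsub
    obtain ⟨t, -, rfl⟩ := Finset.mem_image.mp hB
    show (if ({t} : Finset (Fin n)) ∈ univ.image (fun t : Fin n => ({t} : Finset (Fin n)))
        then ({t} : Finset (Fin n)).image (y.atomWord i) else ∅) ⊆ y.w i B'
    rw [if_pos (show ({t} : Finset (Fin n)) ∈ univ.image (fun t : Fin n => ({t} : Finset (Fin n))) from hB), Finset.image_singleton]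
    have hB'eq : B' = y.partOf t := (y.partOf_eq hB' (hsub (Finset.mem_singleton_self t))).symm
    rw [hB'eq]
    exact Finset.singleton_subset_iff.mpr (atomWord_mem y i t)

lemma partOf_eq_singleton_of_bot_covby {y : VPart n s}
    (h : (⊥ : WithBot (VPart n s)) ⋖ (y : WithBot (VPart n s))) (t : Fin n) :
    y.partOf t = {t} := by
  rcases eq_or_lt_of_le (toAtom_le y) with he | hlt
  · rw [← he]; exact toAtom_partOf y t
  · exact absurd (WithBot.coe_lt_coe.mpr hlt) (h.2 (WithBot.bot_lt_coe _))

end VPart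

namespace VPart
open Stmt13Aux

variable {n s : ℕ} {X Y : VPart n s} {B1 B2 : Finset (Fin n)}

lemma merge_partOf_outside (h1 : B1 ∈ X.P.parts) (h2 : B2 ∈ X.P.parts) (hne : B1 ≠ B2)
    {t : Fin n} (ht : t ∉ B1 ∪ B2) :
    (merge X B1 B2 h1 h2 hne).partOf t = X.partOf t := by
  have hC : X.partOf t ∈ (X.P.parts.erase B1).erase B2 := by
    refine Finset.mem_erase.mpr ⟨?_, Finset.mem_erase.mpr ⟨?_, X.partOf_mem t⟩⟩
    · exact fun h => ht (Finset.mem_union_right _ (h ▸ X.mem_partOf t))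
    · exact fun h => ht (Finset.mem_union_left _ (h ▸ X.mem_partOf t))
  exact partOf_eq _ (Finset.mem_insert_of_mem hC) (X.mem_partOf t)

lemma mkLbl_inj {a b c a' b' c' : ℤ} (h : mkLbl a b c = mkLbl a' b' c') :
    a = a' ∧ b = b' ∧ c = c' := by
  unfold mkLbl at h
  rw [toLex_inj, Prod.mk.injEq, toLex_inj, Prod.mk.injEq] at h
  exact ⟨h.1, h.2.1, h.2.2⟩

lemma mkLbl_le_fst {a b c a' b' c' : ℤ} (h : mkLbl a b c ≤ mkLbl a' b' c') : a ≤ a' := by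
  unfold mkLbl at h
  rcases Prod.Lex.le_iff.mp h with h | h
  · exact le_of_lt h
  · exact le_of_eq h.1

lemma lam_coe (x y : VPart n s) : lam (x : WithBot (VPart n s)) (y : WithBot (VPart n s)) =
    if atomWord x = atomWord y then mkLbl n (mergeMax x y) 0 else firstDiff x y := rfl

lemma lam_bot (y : VPart n s) : lam (⊥ : WithBot (VPart n s)) (y : WithBot (VPart n s)) =
    mkLbl ((n : ℤ) - 1) (s + atomIndex y) 0 := rfl

open scoped Classical in
lemma firstDiff_spec {x y : VPart n s} (h : atomWord x ≠ atomWord y) :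
    ∃ (K : Fin n) (I : Fin s),
      firstDiff x y = mkLbl ((K : ℕ) + 1) ((I : ℕ) + 1) ((atomWord y I K : ℕ) + 1) ∧
      (∀ (i : Fin s) (t : Fin n), atomWord x i t ≠ atomWord y i t → K ≤ t) ∧
      (∃ i : Fin s, atomWord x i K ≠ atomWord y i K) := by
  have hD : (Finset.univ.filter fun p : Fin n × Fin s =>
      atomWord x p.2 p.1 ≠ atomWord y p.2 p.1).Nonempty := by
    rw [Function.ne_iff] at h
    obtain ⟨i, hi⟩ := h
    rw [Function.ne_iff] at hi
    obtain ⟨kk, hkk⟩ := hi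
    exact ⟨(kk, i), Finset.mem_filter.mpr ⟨Finset.mem_univ _, hkk⟩⟩
  unfold firstDiff
  rw [dif_pos hD]
  refine ⟨_, _, rfl, ?_, ?_⟩
  · intro i t hdiff
    exact Finset.min'_le _ _ (Finset.mem_image.mpr
      ⟨(t, i), Finset.mem_filter.mpr ⟨Finset.mem_univ _, hdiff⟩, rfl⟩)
  · have hmem := Finset.min'_mem _ (hD.image Prod.fst)
    obtain ⟨p, hp, hpk⟩ := Finset.mem_image.mp hmem
    exact ⟨p.2, by rw [← hpk]; exact (Finset.mem_filter.mp hp).2⟩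

end VPart


open VPart in
/-- if `x ⋖ y` is an edge of a decreasing maximal chain with label
`(k, i, j)` and `k ≤ n - 1`, then in the underlying partition of `y` every element of
`[k-1]` is a singleton part and the part containing `k` is not a singleton. -/
theorem statement13 (n s : ℕ) (c : Fin (n + 1) -> WithBot (VPart n s))
    (h0 : c 0 = ⊥) (htop : IsTop (c (Fin.last n)))
    (hcov : ∀ e : Fin n, c e.castSucc ⋖ c e.succ)
    (hdec : Antitone fun e : Fin n => lam (c e.castSucc) (c e.succ))
    (e : Fin n) (X Y : VPart n s)
    (hX : c e.castSucc = X) (hY : c e.succ = Y)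
    (k i j : ℤ) (hlam : lam (c e.castSucc) (c e.succ) = mkLbl k i j)
    (hk : k ≤ (n : ℤ) - 1) :
    (∀ m : Fin n, (m : ℤ) + 1 < k -> {m} ∈ Y.P.parts) ∧
    ∀ K : Fin n, (K : ℤ) + 1 = k -> ∃ B ∈ Y.P.parts, K ∈ B ∧ 2 ≤ B.card := by
  classical
  have npos : 0 < n := e.pos
  have hev : (e : ℕ) < n := e.isLt
  have hcove := hcov e
  rw [hX, hY] at hcove
  have hcovXY : X ⋖ Y := covby_coe hcove
  have hXYle : X ≤ Y := hcovXY.1.le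
  rw [hX, hY, lam_coe] at hlam
  have hW : ¬ atomWord X = atomWord Y := by
    intro hW
    rw [if_pos hW] at hlam
    obtain ⟨h1, -, -⟩ := mkLbl_inj hlam
    omega
  rw [if_neg hW] at hlam
  obtain ⟨K, I, hfd, hlow, hdiff⟩ := firstDiff_spec hW
  rw [hfd] at hlam
  obtain ⟨hkK, -, -⟩ := mkLbl_inj hlam
  -- step 0 data
  have hbot : c (⟨0, npos⟩ : Fin n).castSucc = ⊥ := by
    rw [show (⟨0, npos⟩ : Fin n).castSucc = (0 : Fin (n+1)) from Fin.ext rfl]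
    exact h0
  have hcov0 := hcov ⟨0, npos⟩
  rw [hbot] at hcov0
  obtain ⟨Y1, hY1⟩ := WithBot.ne_bot_iff_exists.mp hcov0.lt.ne'
  have hlam0 : lam (c (⟨0, npos⟩ : Fin n).castSucc) (c (⟨0, npos⟩ : Fin n).succ)
      = mkLbl ((n : ℤ) - 1) (s + atomIndex Y1) 0 := by
    rw [hbot, ← hY1]
    rfl
  -- no covering step of the chain has equal atom words
  have hwordsne : ∀ (E : Fin n) (Z Z' : VPart n s), c E.castSucc = ↑Z → c E.succ = ↑Z' →
      atomWord Z ≠ atomWord Z' := by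
    intro E Z Z' hcE hcE' hweq
    have hle : (⟨0, npos⟩ : Fin n) ≤ E := by
      rw [Fin.le_def]
      exact Nat.zero_le _
    have hmono : lam (c E.castSucc) (c E.succ)
        ≤ lam (c (⟨0, npos⟩ : Fin n).castSucc) (c (⟨0, npos⟩ : Fin n).succ) := hdec hle
    rw [hlam0, hcE, hcE', lam_coe, if_pos hweq] at hmono
    have hfst := mkLbl_le_fst hmono
    omega
  constructor
  · -- part 1: everything below K is a singleton part of Y
    intro m hm
    have hmK : (m : ℕ) < (K : ℕ) := by omega
    have key : ∀ (t : ℕ) (_ht : t ≤ (e : ℕ)), ∃ Z : VPart n s,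
        c (⟨t + 1, by omega⟩ : Fin (n + 1)) = ↑Z ∧ Z.partOf m = {m} := by
      intro t
      induction t with
      | zero =>
        intro _
        refine ⟨Y1, ?_, ?_⟩
        · exact hY1.symm
        · have hbc : (⊥ : WithBot (VPart n s)) ⋖ (Y1 : WithBot (VPart n s)) := by
            rw [hY1]
            exact hcov0
          exact partOf_eq_singleton_of_bot_covby hbc m
      | succ t ih =>
        intro ht
        obtain ⟨Z, hcZ, hZm⟩ := ih (by omega)
        have hcE : c (⟨t + 1, by omega⟩ : Fin n).castSucc = ↑Z := hcZ
        have hltE := (hcov ⟨t + 1, by omega⟩).lt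
        rw [hcE] at hltE
        obtain ⟨Z', hcZ'⟩ := WithBot.ne_bot_iff_exists.mp ((WithBot.bot_lt_coe Z).trans hltE).ne'
        have hcovE : Z ⋖ Z' := by
          have h := hcov (⟨t + 1, by omega⟩ : Fin n)
          rw [hcE, ← hcZ'] at h
          exact covby_coe h
        refine ⟨Z', hcZ'.symm, ?_⟩
        by_contra hsm
        obtain ⟨B1, B2, h1, h2, hne12, hmrg⟩ := exists_merge_of_covby hcovE
        have hmem : m ∈ B1 ∪ B2 := by
          by_contra hout
          apply hsm
          rw [hmrg, merge_partOf_outside h1 h2 hne12 hout]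
          exact hZm
        have hZne : atomWord Z ≠ atomWord Z' :=
          hwordsne ⟨t + 1, by omega⟩ Z Z' hcE hcZ'.symm
        have hstep : ∀ (C1 C2 : Finset (Fin n)) (g1 : C1 ∈ Z.P.parts) (g2 : C2 ∈ Z.P.parts)
            (gne : C1 ≠ C2), Z' = merge Z C1 C2 g1 g2 gne → m ∈ C1 → False := by
          intro C1 C2 g1 g2 gne hmrg2 hm1
          have hB1 : C1 = {m} := by rw [← Z.partOf_eq g1 hm1, hZm]
          subst hB1
          have hnag : ¬ ∀ (i' : Fin s) (t' : Fin n), t' ≤ m →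
              Z.atomWord i' t' = (merge Z {m} C2 g1 g2 gne).atomWord i' t' := by
            intro hag
            apply hZne
            funext i' t'
            rw [hmrg2]
            exact agree_all_of_agree_le g1 g2 gne hag i' t'
          push_neg at hnag
          obtain ⟨i0, t0, ht0, hne0⟩ := hnag
          rw [← hmrg2] at hne0
          obtain ⟨K2, I2, hfd2, hlow2, -⟩ := firstDiff_spec hZne
          have hK2 : (K2 : ℕ) ≤ (t0 : ℕ) := hlow2 i0 t0 hne0
          have hle : (⟨t + 1, by omega⟩ : Fin n) ≤ e := by
            rw [Fin.le_def]
            exact ht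
          have hmono : lam (c e.castSucc) (c e.succ)
              ≤ lam (c (⟨t + 1, by omega⟩ : Fin n).castSucc)
                  (c (⟨t + 1, by omega⟩ : Fin n).succ) := hdec hle
          rw [hX, hY, lam_coe, if_neg hW, hfd, hcE, ← hcZ', lam_coe, if_neg hZne, hfd2] at hmono
          have hfst := mkLbl_le_fst hmono
          have hc2 : (t0 : ℕ) ≤ (m : ℕ) := ht0
          omega
        rcases Finset.mem_union.mp hmem with hm1 | hm2
        · exact hstep B1 B2 h1 h2 hne12 hmrg hm1
        · rw [merge_comm h1 h2 hne12] at hmrg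
          exact hstep B2 B1 h2 h1 hne12.symm hmrg hm2
    obtain ⟨Z, hcZ, hZm⟩ := key (e : ℕ) le_rfl
    have hcsucc : c e.succ = ↑Z := hcZ
    have hZY : Y = Z := WithBot.coe_inj.mp (hY.symm.trans hcsucc)
    rw [hZY, ← hZm]
    exact Z.partOf_mem m
  · -- part 2: the part containing K is not a singleton
    intro K' hK'
    have hKK : K' = K := Fin.ext (by omega)
    subst hKK
    refine ⟨Y.partOf K', Y.partOf_mem K', Y.mem_partOf K', ?_⟩
    by_contra hcard
    push_neg at hcard
    have hpos : 0 < (Y.partOf K').card := Finset.card_pos.mpr ⟨K', Y.mem_partOf K'⟩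
    have hone : (Y.partOf K').card = 1 := by omega
    obtain ⟨x0, hx0⟩ := Finset.card_eq_one.mp hone
    have hx0K : x0 = K' := by
      have hmem := Y.mem_partOf K'
      rw [hx0] at hmem
      exact (Finset.mem_singleton.mp hmem).symm
    obtain ⟨i0, hi0⟩ := hdiff
    exact hi0 (atomWord_eq_of_singleton hXYle (by rw [hx0, hx0K]) i0)
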